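/- Let $\mathcal{H}$ be a real Hilbert space and for $i=1,\dots,m$ let $T_i:\mathcal{H}\to\mathcal{H}$ be nonexpansive and $\alpha_i$-averaged with $\alpha_i\in]0,1[$, i.e., $T_i=(1-\alpha_i)\mathrm{Id}+\alpha_iR_i$ with $R_i$ nonexpansive. Then the composition $T_1\cdots T_m$ is $\phi$-averaged, where $\phi=\big(1+(\sum_{i=1}^m\alpha_i/(1-\alpha_i))^{-1}\big)^{-1}$. -/

import Mathlib

open Finset

/-- `T` is `α`-averaged: `T = (1-α)•Id + α•R` with `R` nonexpansive. -/
def IsAveraged {H : Type*} [NormedAddCommGroup H] [InnerProductSpace ℝ H]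
    (α : ℝ) (T : H → H) : Prop :=
  ∃ R : H → H, (∀ x y : H, ‖R x - R y‖ ≤ ‖x - y‖) ∧
    ∀ x : H, T x = (1 - α) • x + α • R x

section Aux

variable {H : Type*} [NormedAddCommGroup H] [InnerProductSpace ℝ H]

/-- Inequality characterization of averagedness, with `β = (1-α)/α`. -/
def AvgIneq (β : ℝ) (T : H → H) : Prop :=
  ∀ x y : H, ‖T x - T y‖^2 + β * ‖(x - T x) - (y - T y)‖^2 ≤ ‖x - y‖^2

lemma expand_sq (s t : ℝ) (u v : H) :
    ‖s • u + t • v‖^2 = s^2*‖u‖^2 + 2*s*t*(inner ℝ u v : ℝ) + t^2*‖v‖^2 := by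
  rw [norm_add_sq_real, norm_smul, norm_smul, real_inner_smul_left, real_inner_smul_right,
    mul_pow, mul_pow]
  simp only [Real.norm_eq_abs, sq_abs]
  ring

lemma smul_norm_sq (s : ℝ) (u : H) : ‖s • u‖^2 = s^2 * ‖u‖^2 := by
  rw [norm_smul, mul_pow]
  simp [Real.norm_eq_abs, sq_abs]

lemma real_ineq1 (α a b c : ℝ) (h0 : 0 < α) (h1 : α < 1) (hb2 : b^2 ≤ a^2) :
    (1-α)^2*a^2 + 2*(1-α)*α*c + α^2*b^2 + (1-α)/α*(α^2*(a^2 - 2*c + b^2)) ≤ a^2 := by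
  have h : (1-α)/α*(α^2*(a^2 - 2*c + b^2)) = (1-α)*α*(a^2 - 2*c + b^2) := by
    field_simp
  rw [h]
  nlinarith [mul_pos h0 (sub_pos.mpr h1)]

lemma real_ineq2 (α a b c d : ℝ) (h0 : 0 < α) (h1 : α < 1)
    (hd : α^2*d^2 = (α-1)^2*a^2 + 2*(α-1)*1*c + 1^2*b^2)
    (h' : b^2 + (1-α)/α*(a^2 - 2*c + b^2) ≤ a^2) : d^2 ≤ a^2 := by
  have heq : α*(b^2 + (1-α)/α*(a^2 - 2*c + b^2)) = α*b^2 + (1-α)*(a^2 - 2*c + b^2) := by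
    field_simp
  have h2 : α*b^2 + (1-α)*(a^2 - 2*c + b^2) ≤ α*a^2 := by
    rw [← heq]
    exact mul_le_mul_of_nonneg_left h' h0.le
  nlinarith [mul_pos h0 h0]

lemma averaged_of_ineq {α : ℝ} (hα : α ∈ Set.Ioo (0:ℝ) 1) {T : H → H}
    (h : AvgIneq ((1-α)/α) T) : IsAveraged α T := by
  obtain ⟨hα0, hα1⟩ := hα
  have hαne : α ≠ 0 := ne_of_gt hα0
  refine ⟨fun x => (1 - α⁻¹) • x + α⁻¹ • T x, ?_, ?_⟩
  · intro x y
    have h' := h x y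
    have e1 : (x - T x) - (y - T y) = (x - y) - (T x - T y) := by abel
    have hexp : ‖(x - y) - (T x - T y)‖^2
        = ‖x - y‖^2 - 2*(inner ℝ (x - y) (T x - T y) : ℝ) + ‖T x - T y‖^2 :=
      norm_sub_sq_real _ _
    rw [e1, hexp] at h'
    have hR : ((1 - α⁻¹) • x + α⁻¹ • T x) - ((1 - α⁻¹) • y + α⁻¹ • T y)
        = (1 - α⁻¹) • (x - y) + α⁻¹ • (T x - T y) := by module
    have hRs : α • (((1 - α⁻¹) • x + α⁻¹ • T x) - ((1 - α⁻¹) • y + α⁻¹ • T y))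
        = (α - 1) • (x - y) + (1:ℝ) • (T x - T y) := by
      rw [hR, smul_add, smul_smul, smul_smul, mul_inv_cancel₀ hαne, mul_one_sub,
        mul_inv_cancel₀ hαne]
    have hd : α^2 * ‖((1 - α⁻¹) • x + α⁻¹ • T x) - ((1 - α⁻¹) • y + α⁻¹ • T y)‖^2
        = (α-1)^2*‖x - y‖^2 + 2*(α-1)*1*(inner ℝ (x - y) (T x - T y) : ℝ)
          + 1^2*‖T x - T y‖^2 := by
      rw [← expand_sq, ← hRs, smul_norm_sq]
    have hsq := real_ineq2 α ‖x - y‖ ‖T x - T y‖ (inner ℝ (x - y) (T x - T y))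
      ‖((1 - α⁻¹) • x + α⁻¹ • T x) - ((1 - α⁻¹) • y + α⁻¹ • T y)‖ hα0 hα1 hd h'
    have := norm_nonneg (((1 - α⁻¹) • x + α⁻¹ • T x) - ((1 - α⁻¹) • y + α⁻¹ • T y))
    nlinarith [norm_nonneg (x - y)]
  · intro x
    have key : (1 - α) • x + α • ((1 - α⁻¹) • x + α⁻¹ • T x) = T x := by
      rw [smul_add, smul_smul, smul_smul, mul_inv_cancel₀ hαne, one_smul, ← add_assoc,
        ← add_smul]
      have h0 : (1 - α) + α * (1 - α⁻¹) = 0 := by field_simp; ring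
      rw [h0, zero_smul, zero_add]
    exact key.symm

lemma ineq_of_averaged {α : ℝ} (hα : α ∈ Set.Ioo (0:ℝ) 1) {T : H → H}
    (h : IsAveraged α T) : AvgIneq ((1-α)/α) T := by
  obtain ⟨hα0, hα1⟩ := hα
  obtain ⟨R, hR, hTx⟩ := h
  intro x y
  have hu : T x - T y = (1-α) • (x - y) + α • (R x - R y) := by
    rw [hTx x, hTx y]; module
  have hw : (x - T x) - (y - T y) = α • ((x - y) - (R x - R y)) := by
    rw [hTx x, hTx y]; module
  have hexp : ‖(x - y) - (R x - R y)‖^2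
      = ‖x - y‖^2 - 2*(inner ℝ (x - y) (R x - R y) : ℝ) + ‖R x - R y‖^2 :=
    norm_sub_sq_real _ _
  rw [hu, hw, expand_sq, smul_norm_sq, hexp]
  have hb2 : ‖R x - R y‖^2 ≤ ‖x - y‖^2 :=
    pow_le_pow_left₀ (norm_nonneg _) (hR x y) 2
  linarith [real_ineq1 α ‖x - y‖ ‖R x - R y‖ (inner ℝ (x - y) (R x - R y)) hα0 hα1 hb2]

lemma avgIneq_comp {β1 β2 : ℝ} (hβ1 : 0 < β1) (hβ2 : 0 < β2) {S T : H → H}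
    (hS : AvgIneq β1 S) (hT : AvgIneq β2 T) :
    AvgIneq (β1⁻¹ + β2⁻¹)⁻¹ (S ∘ T) := by
  intro x y
  have hβ' : (β1⁻¹ + β2⁻¹)⁻¹ = β1*β2/(β1+β2) := by
    rw [inv_eq_iff_eq_inv]
    field_simp
    ring
  have h1 := hS (T x) (T y)
  have h2 := hT x y
  set a : H := (x - y) - (T x - T y) with ha
  set b : H := (T x - T y) - (S (T x) - S (T y)) with hb
  have e1 : (T x - S (T x)) - (T y - S (T y)) = b := by rw [hb]; abel
  have e0 : (x - T x) - (y - T y) = a := by rw [ha]; abel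
  rw [e1] at h1
  rw [e0] at h2
  simp only [Function.comp_apply]
  rw [show (x - S (T x)) - (y - S (T y)) = a + b by rw [ha, hb]; abel, hβ']
  have hab : ‖a + b‖^2 = ‖a‖^2 + 2*(inner ℝ a b : ℝ) + ‖b‖^2 := norm_add_sq_real a b
  have hinner : (inner ℝ a b : ℝ) ≤ ‖a‖ * ‖b‖ := real_inner_le_norm a b
  have key : β1*β2/(β1+β2) * ‖a+b‖^2 ≤ β2*‖a‖^2 + β1*‖b‖^2 := by
    rw [div_mul_eq_mul_div, div_le_iff₀ (by linarith : (0:ℝ) < β1+β2)]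
    nlinarith [sq_nonneg (β2*‖a‖ - β1*‖b‖), mul_pos hβ1 hβ2, hab, hinner,
      norm_nonneg a, norm_nonneg b]
  linarith

lemma avgIneq_fold : ∀ (m : ℕ), 1 ≤ m → ∀ (T : Fin m → H → H) (β : Fin m → ℝ),
    (∀ i, 0 < β i) → (∀ i, AvgIneq (β i) (T i)) →
    AvgIneq (∑ i, (β i)⁻¹)⁻¹ ((List.ofFn T).foldr (· ∘ ·) id) := by
  intro m
  induction m with
  | zero => intro h; omega
  | succ n ih =>
    intro _ T β hβ hT
    rcases Nat.eq_zero_or_pos n with hn | hn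
    · subst hn
      intro x y
      have := hT 0 x y
      simp only [List.ofFn_succ, List.ofFn_zero, List.foldr_cons, List.foldr_nil,
        Function.comp_apply, id_eq]
      rw [show (∑ i : Fin 1, (β i)⁻¹)⁻¹ = β 0 by simp [Fin.sum_univ_one, inv_inv]]
      simpa using this
    · have ihres := ih hn (fun i => T i.succ) (fun i => β i.succ)
        (fun i => hβ i.succ) (fun i => hT i.succ)
      have hsumpos : 0 < ∑ i : Fin n, (β i.succ)⁻¹ := by
        apply Finset.sum_pos
        · intro i _; exact inv_pos.mpr (hβ i.succ)
        · have : Nonempty (Fin n) := Fin.pos_iff_nonempty.mp hn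
          exact Finset.univ_nonempty
      have hcomp := avgIneq_comp (hβ 0) (inv_pos.mpr hsumpos) (hT 0) ihres
      rw [inv_inv] at hcomp
      have heq : (∑ i : Fin (n+1), (β i)⁻¹) = (β 0)⁻¹ + ∑ i : Fin n, (β i.succ)⁻¹ :=
        Fin.sum_univ_succ _
      rw [show (List.ofFn T).foldr (· ∘ ·) id
          = (T 0) ∘ ((List.ofFn fun i => T i.succ).foldr (· ∘ ·) id) by
        rw [List.ofFn_succ, List.foldr_cons], heq]
      exact hcomp

end Aux

theorem composition_averaged
    {H : Type*} [NormedAddCommGroup H] [InnerProductSpace ℝ H]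
    (m : ℕ) (hm : 1 ≤ m)
    (T : Fin m → H → H) (α : Fin m → ℝ)
    (hα : ∀ i, α i ∈ Set.Ioo (0 : ℝ) 1)
    (hT : ∀ i, IsAveraged (α i) (T i)) :
    IsAveraged ((1 + (∑ i, α i / (1 - α i))⁻¹)⁻¹)
      ((List.ofFn T).foldr (· ∘ ·) id) := by
  have hβpos : ∀ i, 0 < (1 - α i)/(α i) := fun i =>
    div_pos (by linarith [(hα i).2]) (hα i).1
  have hfold := avgIneq_fold m hm T (fun i => (1 - α i)/(α i)) hβpos
    (fun i => ineq_of_averaged (hα i) (hT i))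
  have hinvβ : ∀ i, ((1 - α i)/(α i))⁻¹ = α i / (1 - α i) := fun i => by
    rw [inv_div]
  simp only [hinvβ] at hfold
  set s : ℝ := ∑ i, α i / (1 - α i) with hs
  have hspos : 0 < s := by
    apply Finset.sum_pos
    · intro i _; exact div_pos (hα i).1 (by linarith [(hα i).2])
    · have : Nonempty (Fin m) := Fin.pos_iff_nonempty.mp hm
      exact Finset.univ_nonempty
  have ht : (0:ℝ) < s⁻¹ := inv_pos.mpr hspos
  have hφmem : (1 + s⁻¹)⁻¹ ∈ Set.Ioo (0:ℝ) 1 := by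
    constructor
    · exact inv_pos.mpr (by linarith)
    · exact inv_lt_one_of_one_lt₀ (by linarith)
  apply averaged_of_ineq hφmem
  have hφeq : (1 - (1 + s⁻¹)⁻¹)/(1 + s⁻¹)⁻¹ = s⁻¹ := by
    have h1 : (1:ℝ) + s⁻¹ ≠ 0 := by positivity
    field_simp; ring
  rw [hφeq]
  exact hfold
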